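/- Let q be a primitive m-th root of unity in K, λ₁, λ₂ ∈ K nonzero, and p > 1. Then the quotient Q_{p,m} = M(λ)/M_{p,m} of the Verma module is a right Mat₂(q)-module of K-dimension p·m² that is indecomposable (it is not the direct sum of two nonzero submodules) but is neither simple nor semisimple. -/

import Mathlib

noncomputable section

open FreeAlgebra MulOpposite

/-- The relations of the Dipper–Donkin quantized matrix algebra of rank 2:
`Z12·Z11 = Z11·Z12`, `Z21·Z11 = q·Z11·Z21`, `Z22·Z21 = Z21·Z22`, `Z22·Z12 = q·Z12·Z22`,
`Z21·Z12 = q·Z12·Z21`, `Z22·Z11 = Z11·Z22 + (q−1)·Z12·Z21`, where the generators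
`Z11, Z12, Z21, Z22` are the images of `0, 1, 2, 3 : Fin 4`. -/
inductive DDrel {K : Type*} [Field K] (q : K) :
    FreeAlgebra K (Fin 4) → FreeAlgebra K (Fin 4) → Prop
  | r1 : DDrel q (ι K (1 : Fin 4) * ι K (0 : Fin 4)) (ι K (0 : Fin 4) * ι K (1 : Fin 4))
  | r2 : DDrel q (ι K (2 : Fin 4) * ι K (0 : Fin 4)) (q • (ι K (0 : Fin 4) * ι K (2 : Fin 4)))
  | r3 : DDrel q (ι K (3 : Fin 4) * ι K (2 : Fin 4)) (ι K (2 : Fin 4) * ι K (3 : Fin 4))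
  | r4 : DDrel q (ι K (3 : Fin 4) * ι K (1 : Fin 4)) (q • (ι K (1 : Fin 4) * ι K (3 : Fin 4)))
  | r5 : DDrel q (ι K (2 : Fin 4) * ι K (1 : Fin 4)) (q • (ι K (1 : Fin 4) * ι K (2 : Fin 4)))
  | r6 : DDrel q (ι K (3 : Fin 4) * ι K (0 : Fin 4))
      (ι K (0 : Fin 4) * ι K (3 : Fin 4) + (q - 1) • (ι K (1 : Fin 4) * ι K (2 : Fin 4)))

/-- The Dipper–Donkin quantized matrix algebra `Mat₂(q)`: the quotient of the free
`K`-algebra on four generators by the two-sided ideal generated by the relations above. -/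
abbrev DDMat2 {K : Type*} [Field K] (q : K) := RingQuot (DDrel q)

variable {K : Type*} [Field K]

/-- The generator `Z11` of `Mat₂(q)`. -/
def Z11 (q : K) : DDMat2 q := RingQuot.mkAlgHom K (DDrel q) (ι K (0 : Fin 4))
/-- The generator `Z12` of `Mat₂(q)`. -/
def Z12 (q : K) : DDMat2 q := RingQuot.mkAlgHom K (DDrel q) (ι K (1 : Fin 4))
/-- The generator `Z21` of `Mat₂(q)`. -/
def Z21 (q : K) : DDMat2 q := RingQuot.mkAlgHom K (DDrel q) (ι K (2 : Fin 4))
/-- The generator `Z22` of `Mat₂(q)`. -/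
def Z22 (q : K) : DDMat2 q := RingQuot.mkAlgHom K (DDrel q) (ι K (3 : Fin 4))

/-- The underlying space of the Verma module `M(λ)`: the `K`-vector space with basis
`f(a,b)`, `a : Fin m`, `b : ℕ`, realized as finitely supported functions. -/
abbrev VermaSpace (K : Type*) [Field K] (m : ℕ) := ((Fin m × ℕ) →₀ K)

variable (q la lb : K) (m : ℕ) [NeZero m]

/-- The action of `Z11` on the Verma module `M(λ)`:
`f(a,b)·Z11 = 0` if `b = 0` and `λ₁·q^a·(q^b − 1)·f(a+1,b−1)` if `b ≥ 1`, where `f(m,c)`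
is interpreted as `λ₂·f(0,c)` (addition in `Fin m` is cyclic). -/
noncomputable def VF11 : VermaSpace K m →ₗ[K] VermaSpace K m :=
  Finsupp.linearCombination K fun p : Fin m × ℕ =>
    if p.2 = 0 then 0 else
      ((if (p.1 : ℕ) = m - 1 then lb else 1) * la * q ^ (p.1 : ℕ) * (q ^ p.2 - 1)) •
        Finsupp.single (p.1 + 1, p.2 - 1) (1 : K)

/-- The action of `Z12` on the Verma module: `f(a,b)·Z12 = q^{a+b}·λ₁·f(a,b)`. -/
noncomputable def VF12 : VermaSpace K m →ₗ[K] VermaSpace K m :=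
  Finsupp.linearCombination K fun p : Fin m × ℕ =>
    (q ^ ((p.1 : ℕ) + p.2) * la) • Finsupp.single p (1 : K)

/-- The action of `Z21` on the Verma module:
`f(a,b)·Z21 = f(a+1,b)` if `a ≤ m−2` and `λ₂·f(0,b)` if `a = m−1`. -/
noncomputable def VF21 : VermaSpace K m →ₗ[K] VermaSpace K m :=
  Finsupp.linearCombination K fun p : Fin m × ℕ =>
    (if (p.1 : ℕ) = m - 1 then lb else 1) • Finsupp.single (p.1 + 1, p.2) (1 : K)

/-- The action of `Z22` on the Verma module: `f(a,b)·Z22 = f(a,b+1)`. -/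
noncomputable def VF22 : VermaSpace K m →ₗ[K] VermaSpace K m :=
  Finsupp.linearCombination K fun p : Fin m × ℕ =>
    Finsupp.single (p.1, p.2 + 1) (1 : K)

/-- The subspace `M_{p,m}` of the Verma module, spanned by the basis vectors `f(a,b)`
with `b ≥ p·m`. -/
def Mpm (p : ℕ) : Submodule K (VermaSpace K m) :=
  Submodule.span K
    {v : VermaSpace K m | ∃ (a : Fin m) (b : ℕ), p * m ≤ b ∧ v = Finsupp.single (a, b) (1 : K)}

namespace QpAux
open scoped Classical
open scoped Fin.NatCast Fin.CommRing
set_option linter.unusedSectionVars false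

lemma VF11_single (a : Fin m) (b : ℕ) :
    VF11 q la lb m (Finsupp.single (a, b) (1 : K)) =
      if b = 0 then 0 else
      ((if (a : ℕ) = m - 1 then lb else 1) * la * q ^ (a : ℕ) * (q ^ b - 1)) •
        Finsupp.single (a + 1, b - 1) (1 : K) := by
  simp [VF11, Finsupp.linearCombination_single]

lemma VF12_single (a : Fin m) (b : ℕ) :
    VF12 q la m (Finsupp.single (a, b) (1 : K)) =
      (q ^ ((a : ℕ) + b) * la) • Finsupp.single (a, b) (1 : K) := by
  simp [VF12, Finsupp.linearCombination_single]

lemma VF21_single (a : Fin m) (b : ℕ) :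
    VF21 lb m (Finsupp.single (a, b) (1 : K)) =
      (if (a : ℕ) = m - 1 then lb else 1) • Finsupp.single (a + 1, b) (1 : K) := by
  simp [VF21, Finsupp.linearCombination_single]

lemma VF22_single (a : Fin m) (b : ℕ) :
    VF22 (K := K) m (Finsupp.single (a, b) (1 : K)) = Finsupp.single (a, b + 1) (1 : K) := by
  simp [VF22, Finsupp.linearCombination_single]

/-- generic diagonal operator on a finsupp space -/
noncomputable def diagMap {σ : Type*} (μ : σ → K) : (σ →₀ K) →ₗ[K] (σ →₀ K) :=
  Finsupp.linearCombination K fun x => μ x • Finsupp.single x (1 : K)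

lemma diagMap_apply {σ : Type*} (μ : σ → K) (v : σ →₀ K) (y : σ) :
    diagMap μ v y = μ y * v y := by
  classical
  rw [diagMap, Finsupp.linearCombination_apply, Finsupp.sum_apply]
  rw [Finsupp.sum]
  simp only [Finsupp.smul_apply, Finsupp.single_apply, smul_eq_mul, mul_ite, mul_one, mul_zero]
  rw [Finset.sum_eq_single y]
  · by_cases h : y ∈ v.support
    · simp [mul_comm]
    · simp [Finsupp.notMem_support_iff.mp h]
  · intro x _ hxy
    simp [hxy]
  · intro h
    simp [Finsupp.notMem_support_iff.mp h]

lemma VF12_eq_diag : VF12 q la m = diagMap (fun x : Fin m × ℕ => q ^ ((x.1 : ℕ) + x.2) * la) :=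
  rfl

set_option linter.unusedSectionVars false

lemma filter_mem {σ : Type*} [DecidableEq σ] (μ : σ → K) (W : Submodule K (σ →₀ K))
    (hW : ∀ v ∈ W, diagMap μ v ∈ W) :
    ∀ (n : ℕ) (v : σ →₀ K), v ∈ W → (v.support.image μ).card ≤ n →
      ∀ t : K, v.filter (fun x => μ x = t) ∈ W := by
  classical
  intro n
  induction n with
  | zero =>
    intro v hv hc t
    have : v.support = ∅ := by
      by_contra h
      obtain ⟨x, hx⟩ := Finset.nonempty_iff_ne_empty.mpr h
      have : μ x ∈ v.support.image μ := Finset.mem_image_of_mem μ hx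
      have := Finset.card_pos.mpr ⟨_, this⟩
      omega
    have hv0 : v = 0 := Finsupp.support_eq_empty.mp this
    simp [hv0, Finsupp.filter_zero]
  | succ n ih =>
    intro v hv hc t
    by_cases hall : ∀ x ∈ v.support, μ x = t
    · have : v.filter (fun x => μ x = t) = v := by
        ext y
        rw [Finsupp.filter_apply]
        by_cases hy : y ∈ v.support
        · simp [hall y hy]
        · simp only [Finsupp.notMem_support_iff.mp hy]; split <;> rfl
      rwa [this]
    · push_neg at hall
      obtain ⟨x₀, hx₀, hμx₀⟩ := hall
      set s : K := μ x₀ with hs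
      -- v' kills the fiber μ = s
      set v' : σ →₀ K := diagMap μ v - s • v with hv'
      have hv'W : v' ∈ W := sub_mem (hW v hv) (Submodule.smul_mem _ _ hv)
      have hv'app : ∀ y, v' y = (μ y - s) * v y := by
        intro y; simp [hv', diagMap_apply, sub_mul]
      have hsupp : v'.support ⊆ v.support := by
        intro y hy
        rw [Finsupp.mem_support_iff] at hy ⊢
        intro h; rw [hv'app, h, mul_zero] at hy; exact hy rfl
      have himage : v'.support.image μ ⊆ (v.support.image μ).erase s := by
        intro c hc'
        obtain ⟨y, hy, rfl⟩ := Finset.mem_image.mp hc'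
        refine Finset.mem_erase.mpr ⟨?_, Finset.mem_image_of_mem μ (hsupp hy)⟩
        intro h
        rw [Finsupp.mem_support_iff, hv'app, h, sub_self, zero_mul] at hy
        exact hy rfl
      have hcard : (v'.support.image μ).card ≤ n := by
        have h1 : ((v.support.image μ).erase s).card ≤ n := by
          have : s ∈ v.support.image μ := Finset.mem_image_of_mem μ hx₀
          have := Finset.card_erase_of_mem this
          omega
        exact le_trans (Finset.card_le_card himage) h1
      have hfil : v'.filter (fun x => μ x = t) ∈ W := ih v' hv'W hcard t
      have heq : v'.filter (fun x => μ x = t) = (t - s) • v.filter (fun x => μ x = t) := by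
        ext y
        rw [Finsupp.smul_apply, Finsupp.filter_apply, Finsupp.filter_apply]
        by_cases hy : μ y = t
        · simp [hy, hv'app y, smul_eq_mul]
        · simp [hy]
      have hts : t - s ≠ 0 := by
        intro h
        have : t = s := by linear_combination h
        exact hμx₀ this.symm
      have : v.filter (fun x => μ x = t) = (t - s)⁻¹ • v'.filter (fun x => μ x = t) := by
        rw [heq, smul_smul, inv_mul_cancel₀ hts, one_smul]
      rw [this]
      exact Submodule.smul_mem _ _ hfil

lemma VF22_pow_single (a : Fin m) (b t : ℕ) :
    ((VF22 (K := K) m) ^ t) (Finsupp.single (a, b) (1 : K)) =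
      Finsupp.single (a, b + t) (1 : K) := by
  induction t with
  | zero => simp
  | succ t ih =>
    rw [pow_succ', Module.End.mul_apply, ih, VF22_single, ← add_assoc]

lemma VF21_pow_single (a : Fin m) (b : ℕ) (k : ℕ) (hk : k ≤ m) :
    ((VF21 lb m) ^ k) (Finsupp.single (a, b) (1 : K)) =
      (if m ≤ (a : ℕ) + k then lb else 1) • Finsupp.single (a + (k : Fin m), b) (1 : K) := by
  induction k with
  | zero =>
    have h : ¬ m ≤ (a : ℕ) + 0 := by have := a.isLt; omega
    rw [pow_zero, Module.End.one_apply, if_neg h]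
    norm_num
  | succ k ih =>
    have hk' : k ≤ m := by omega
    have hm : 0 < m := Nat.pos_of_ne_zero (NeZero.ne m)
    have halt : (a : ℕ) < m := a.isLt
    have hkm : k < m := by omega
    rw [pow_succ', Module.End.mul_apply, ih hk', map_smul, VF21_single, smul_smul]
    have hval : ((a + (k : Fin m) : Fin m) : ℕ) =
        if (a : ℕ) + k < m then (a : ℕ) + k else (a : ℕ) + k - m := by
      rw [Fin.val_add, Fin.val_cast_of_lt hkm]
      split
      · exact Nat.mod_eq_of_lt (by omega)
      · rw [Nat.mod_eq_sub_mod (by omega)]; exact Nat.mod_eq_of_lt (by omega)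
    have hcast : ((k + 1 : ℕ) : Fin m) = (k : Fin m) + 1 := by push_cast; ring
    have hsing : ((a + ((k : Fin m) + 1) : Fin m), b) = ((a + (k : Fin m) + 1 : Fin m), b) := by
      rw [add_assoc]
    rw [hcast, hsing]
    congr 1
    simp only [hval]
    split_ifs <;> (try (exfalso; omega)) <;> ring

/-- the composite operator `VF21^(m-1) ∘ VF11 ∘ VF22`, which acts diagonally -/
noncomputable def E2 : VermaSpace K m →ₗ[K] VermaSpace K m :=
  ((VF21 lb m) ^ (m - 1)) ∘ₗ (VF11 q la lb m) ∘ₗ (VF22 (K := K) m)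

lemma E2_single (a : Fin m) (b : ℕ) :
    E2 q la lb m (Finsupp.single (a, b) (1 : K)) =
      (la * lb * q ^ (a : ℕ) * (q ^ (b + 1) - 1)) • Finsupp.single (a, b) (1 : K) := by
  have hm : 0 < m := Nat.pos_of_ne_zero (NeZero.ne m)
  rw [E2, LinearMap.comp_apply, LinearMap.comp_apply, VF22_single, VF11_single]
  rw [if_neg (Nat.succ_ne_zero b)]
  have hb1 : b + 1 - 1 = b := rfl
  rw [hb1, map_smul, VF21_pow_single lb m (a + 1) b (m - 1) (Nat.sub_le m 1)]
  have hv : ((a + 1 : Fin m) : ℕ) = ((a : ℕ) + 1) % m := by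
    rw [Fin.val_add]
    have h1 : ((1 : Fin m) : ℕ) = 1 % m := Fin.val_one' m
    rw [h1]
    exact Nat.ModEq.add_left _ (Nat.mod_modEq 1 m)
  have hone : a + 1 + ((m - 1 : ℕ) : Fin m) = a := by
    rw [add_assoc]
    have h2 : (1 : Fin m) + ((m - 1 : ℕ) : Fin m) = 0 := by
      have h3 : (1 : Fin m) + ((m - 1 : ℕ) : Fin m) = ((1 + (m - 1) : ℕ) : Fin m) := by
        push_cast; ring
      rw [h3]
      have h4 : 1 + (m - 1) = m := by omega
      rw [h4, Fin.natCast_self]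
    rw [h2, add_zero]
  rw [hone]
  have hc2 : (if m ≤ ((a + 1 : Fin m) : ℕ) + (m - 1) then lb else 1) =
      (if (a : ℕ) = m - 1 then 1 else lb) := by
    have halt : (a : ℕ) < m := a.isLt
    by_cases h : (a : ℕ) = m - 1
    · have : ((a : ℕ) + 1) % m = 0 := by
        have : (a : ℕ) + 1 = m := by omega
        rw [this, Nat.mod_self]
      rw [if_pos h, if_neg (by rw [hv, this]; omega)]
    · have : ((a : ℕ) + 1) % m = (a : ℕ) + 1 := Nat.mod_eq_of_lt (by omega)
      rw [if_neg h, if_pos (by rw [hv, this]; omega)]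
  rw [hc2, smul_smul]
  congr 1
  split_ifs <;> ring

lemma diagMap_single {σ : Type*} (μ : σ → K) (x : σ) :
    diagMap μ (Finsupp.single x (1 : K)) = μ x • Finsupp.single x (1 : K) := by
  simp [diagMap, Finsupp.linearCombination_single]

lemma E2_eq_diag : E2 q la lb m =
    diagMap (fun x : Fin m × ℕ => la * lb * q ^ ((x.1 : ℕ)) * (q ^ (x.2 + 1) - 1)) := by
  apply Finsupp.lhom_ext
  intro x c
  have hx : (x.1, x.2) = x := rfl
  have h1 : Finsupp.single x c = c • Finsupp.single x (1 : K) := by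
    rw [Finsupp.smul_single, smul_eq_mul, mul_one]
  rw [h1, map_smul, map_smul, ← hx, E2_single, diagMap_single]

lemma Mpm_eq (j : ℕ) :
    Mpm (K := K) m j = Finsupp.supported K K {x : Fin m × ℕ | j * m ≤ x.2} := by
  rw [Finsupp.supported_eq_span_single, Mpm]
  congr 1
  ext v
  constructor
  · rintro ⟨a, b, hb, rfl⟩
    exact ⟨(a, b), hb, rfl⟩
  · rintro ⟨⟨a, b⟩, hb, rfl⟩
    exact ⟨a, b, hb, rfl⟩

lemma mem_Mpm_single (j : ℕ) (a : Fin m) (b : ℕ) (h : j * m ≤ b) (c : K) :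
    Finsupp.single (a, b) c ∈ Mpm (K := K) m j := by
  have h1 : Finsupp.single (a, b) c = c • Finsupp.single (a, b) (1 : K) := by
    rw [Finsupp.smul_single, smul_eq_mul, mul_one]
  rw [h1]
  exact Submodule.smul_mem _ _ (Submodule.subset_span ⟨a, b, h, rfl⟩)

lemma Mpm_mono {j j' : ℕ} (h : j' ≤ j) : Mpm (K := K) m j ≤ Mpm (K := K) m j' := by
  apply Submodule.span_mono
  rintro v ⟨a, b, hb, rfl⟩
  exact ⟨a, b, le_trans (Nat.mul_le_mul_right m h) hb, rfl⟩

lemma Mpm_zero : Mpm (K := K) m 0 = ⊤ := by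
  rw [Mpm_eq]
  have : {x : Fin m × ℕ | 0 * m ≤ x.2} = Set.univ := by
    ext x; simp
  rw [this, Finsupp.supported_univ]

lemma pow_mod_eq (hq1 : q ^ m = 1) (i : ℕ) : q ^ i = q ^ (i % m) := by
  conv_lhs => rw [← Nat.div_add_mod i m]
  rw [pow_add, pow_mul, hq1, one_pow, one_mul]

lemma q_ne_zero (hq1 : q ^ m = 1) : q ≠ 0 := by
  intro h
  rw [h, zero_pow (NeZero.ne m)] at hq1
  exact zero_ne_one hq1

lemma pow_inj_mod (hq1 : q ^ m = 1) (hq2 : ∀ k : ℕ, 1 ≤ k → k < m → q ^ k ≠ 1)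
    {i j : ℕ} (h : q ^ i = q ^ j) : i % m = j % m := by
  have hm : 0 < m := Nat.pos_of_ne_zero (NeZero.ne m)
  have hq0 : q ≠ 0 := q_ne_zero q m hq1
  have h1 : q ^ (i % m) = q ^ (j % m) := by
    rw [← pow_mod_eq q m hq1, ← pow_mod_eq q m hq1]; exact h
  have key : ∀ i' j' : ℕ, i' < m → j' < m → i' ≤ j' → q ^ i' = q ^ j' → i' = j' := by
    intro i' j' hi hj hij hpow
    by_contra hne
    have hd : 1 ≤ j' - i' := by omega
    have : q ^ i' * q ^ (j' - i') = q ^ i' * 1 := by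
      rw [← pow_add, mul_one]
      rw [show i' + (j' - i') = j' by omega]
      exact hpow.symm
    have h2 : q ^ (j' - i') = 1 := mul_left_cancel₀ (pow_ne_zero _ hq0) this
    exact hq2 _ hd (by omega) h2
  rcases le_total (i % m) (j % m) with hle | hle
  · exact key _ _ (Nat.mod_lt _ hm) (Nat.mod_lt _ hm) hle h1
  · exact (key _ _ (Nat.mod_lt _ hm) (Nat.mod_lt _ hm) hle h1.symm).symm

lemma Mpm_inv11 (hq1 : q ^ m = 1) (j : ℕ) :
    ∀ v ∈ Mpm (K := K) m j, VF11 q la lb m v ∈ Mpm (K := K) m j := by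
  intro v hv
  have hle : Mpm (K := K) m j ≤ (Mpm (K := K) m j).comap (VF11 q la lb m) := by
    conv_lhs => rw [Mpm]
    refine Submodule.span_le.mpr ?_
    rintro w ⟨a, b, hb, rfl⟩
    simp only [SetLike.mem_coe, Submodule.mem_comap, VF11_single]
    by_cases h0 : b = 0
    · rw [if_pos h0]; exact Submodule.zero_mem _
    · rw [if_neg h0]
      by_cases hb' : j * m + 1 ≤ b
      · exact Submodule.smul_mem _ _ (mem_Mpm_single m j (a + 1) (b - 1) (by omega) 1)
      · have hbe : b = j * m := by omega
        have hqb : q ^ b = 1 := by rw [hbe, mul_comm, pow_mul, hq1, one_pow]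
        rw [hqb, sub_self, mul_zero, zero_smul]
        exact Submodule.zero_mem _
  exact hle hv

lemma Mpm_inv12 (j : ℕ) :
    ∀ v ∈ Mpm (K := K) m j, VF12 q la m v ∈ Mpm (K := K) m j := by
  intro v hv
  have hle : Mpm (K := K) m j ≤ (Mpm (K := K) m j).comap (VF12 q la m) := by
    conv_lhs => rw [Mpm]
    refine Submodule.span_le.mpr ?_
    rintro w ⟨a, b, hb, rfl⟩
    simp only [SetLike.mem_coe, Submodule.mem_comap, VF12_single]
    exact Submodule.smul_mem _ _ (mem_Mpm_single m j a b hb 1)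
  exact hle hv

lemma Mpm_inv21 (j : ℕ) :
    ∀ v ∈ Mpm (K := K) m j, VF21 lb m v ∈ Mpm (K := K) m j := by
  intro v hv
  have hle : Mpm (K := K) m j ≤ (Mpm (K := K) m j).comap (VF21 lb m) := by
    conv_lhs => rw [Mpm]
    refine Submodule.span_le.mpr ?_
    rintro w ⟨a, b, hb, rfl⟩
    simp only [SetLike.mem_coe, Submodule.mem_comap, VF21_single]
    exact Submodule.smul_mem _ _ (mem_Mpm_single m j (a + 1) b hb 1)
  exact hle hv

lemma Mpm_inv22 (j : ℕ) :
    ∀ v ∈ Mpm (K := K) m j, VF22 (K := K) m v ∈ Mpm (K := K) m j := by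
  intro v hv
  have hle : Mpm (K := K) m j ≤ (Mpm (K := K) m j).comap (VF22 (K := K) m) := by
    conv_lhs => rw [Mpm]
    refine Submodule.span_le.mpr ?_
    rintro w ⟨a, b, hb, rfl⟩
    simp only [SetLike.mem_coe, Submodule.mem_comap, VF22_single]
    exact mem_Mpm_single m j a (b + 1) (by omega) 1
  exact hle hv

lemma smul_mem_cancel {V : Type*} [AddCommGroup V] [Module K V] (W : Submodule K V) {c : K}
    (hc : c ≠ 0) {v : V} (h : c • v ∈ W) : v ∈ W := by
  have h2 := Submodule.smul_mem W c⁻¹ h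
  rwa [smul_smul, inv_mul_cancel₀ hc, one_smul] at h2

lemma classify (hq1 : q ^ m = 1) (hq2 : ∀ k : ℕ, 1 ≤ k → k < m → q ^ k ≠ 1)
    (hla : la ≠ 0) (hlb : lb ≠ 0) (p : ℕ)
    (W : Submodule K (VermaSpace K m))
    (h11 : ∀ v ∈ W, VF11 q la lb m v ∈ W) (h12 : ∀ v ∈ W, VF12 q la m v ∈ W)
    (h21 : ∀ v ∈ W, VF21 lb m v ∈ W) (h22 : ∀ v ∈ W, VF22 (K := K) m v ∈ W)
    (hMp : Mpm (K := K) m p ≤ W) : ∃ j, W = Mpm (K := K) m j := by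
  classical
  have hm : 0 < m := Nat.pos_of_ne_zero (NeZero.ne m)
  have hq0 : q ≠ 0 := q_ne_zero q m hq1
  set T : Set ℕ := {n | ∃ v ∈ W, ∃ a : Fin m, v (a, n) ≠ 0} with hT
  have hTne : p * m ∈ T := by
    refine ⟨Finsupp.single ((0 : Fin m), p * m) 1,
      hMp (mem_Mpm_single m p 0 (p * m) le_rfl 1), 0, ?_⟩
    simp
  set b0 := sInf T with hb0def
  have hb0T : b0 ∈ T := Nat.sInf_mem ⟨_, hTne⟩
  have hmin : ∀ u ∈ W, ∀ x : Fin m × ℕ, u x ≠ 0 → b0 ≤ x.2 := by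
    intro u hu x hx
    exact Nat.sInf_le ⟨u, hu, x.1, by simpa using hx⟩
  obtain ⟨v, hvW, a0, hva0⟩ := hb0T
  set j := b0 / m with hjdef
  have hjm : j * m ≤ b0 := by rw [hjdef]; exact Nat.div_mul_le_self b0 m
  have hjb : b0 < (j + 1) * m := by
    have h1 := Nat.div_add_mod b0 m
    have h2 := Nat.mod_lt b0 hm
    have h3 : (b0 / m + 1) * m = m * (b0 / m) + m := by ring
    rw [hjdef]
    omega
  refine ⟨j, ?_⟩
  -- diagonal invariance
  have hD1 : ∀ u ∈ W, diagMap (fun x : Fin m × ℕ => q ^ ((x.1 : ℕ) + x.2) * la) u ∈ W := by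
    intro u hu; rw [← VF12_eq_diag]; exact h12 u hu
  have h21pow : ∀ (k : ℕ) (u : VermaSpace K m), u ∈ W → ((VF21 lb m) ^ k) u ∈ W := by
    intro k
    induction k with
    | zero => intro u hu; simpa using hu
    | succ k ih =>
      intro u hu
      rw [pow_succ, Module.End.mul_apply]
      exact ih _ (h21 u hu)
  have h22pow : ∀ (t : ℕ) (u : VermaSpace K m), u ∈ W → ((VF22 (K := K) m) ^ t) u ∈ W := by
    intro t
    induction t with
    | zero => intro u hu; simpa using hu
    | succ t ih =>
      intro u hu
      rw [pow_succ, Module.End.mul_apply]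
      exact ih _ (h22 u hu)
  have hD2 : ∀ u ∈ W,
      diagMap (fun x : Fin m × ℕ => la * lb * q ^ ((x.1 : ℕ)) * (q ^ (x.2 + 1) - 1)) u ∈ W := by
    intro u hu
    rw [← E2_eq_diag, E2, LinearMap.comp_apply, LinearMap.comp_apply]
    exact h21pow _ _ (h11 _ (h22 _ hu))
  -- spectral projection
  set μ1 : Fin m × ℕ → K := fun x => q ^ ((x.1 : ℕ) + x.2) * la with hμ1
  set μ2 : Fin m × ℕ → K := fun x => la * lb * q ^ ((x.1 : ℕ)) * (q ^ (x.2 + 1) - 1) with hμ2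
  set w := ((v.filter (fun x => μ1 x = μ1 (a0, b0))).filter (fun x => μ2 x = μ2 (a0, b0)))
    with hwdef
  have hw1W : v.filter (fun x => μ1 x = μ1 (a0, b0)) ∈ W :=
    filter_mem μ1 W hD1 _ v hvW le_rfl _
  have hwW : w ∈ W := filter_mem μ2 W hD2 _ _ hw1W le_rfl _
  have hwapp : ∀ x : Fin m × ℕ, w x =
      if μ2 x = μ2 (a0, b0) then (if μ1 x = μ1 (a0, b0) then v x else 0) else 0 := by
    intro x
    rw [hwdef, Finsupp.filter_apply, Finsupp.filter_apply]
  have hw0 : w (a0, b0) = v (a0, b0) := by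
    rw [hwapp, if_pos rfl, if_pos rfl]
  have hwb : w (a0, b0) ≠ 0 := by rw [hw0]; exact hva0
  -- support structure of w
  have hwsupp : ∀ x : Fin m × ℕ, w x ≠ 0 → x.1 = a0 ∧ x.2 % m = b0 % m := by
    intro x hx
    rw [hwapp] at hx
    by_cases h2 : μ2 x = μ2 (a0, b0)
    · by_cases h1 : μ1 x = μ1 (a0, b0)
      · rw [hμ1] at h1
        rw [hμ2] at h2
        simp only at h1 h2
        have e1 : q ^ ((x.1 : ℕ) + x.2) = q ^ ((a0 : ℕ) + b0) :=
          mul_right_cancel₀ hla h1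
        have e2 : q ^ ((x.1 : ℕ)) * (q ^ (x.2 + 1) - 1) =
            q ^ ((a0 : ℕ)) * (q ^ (b0 + 1) - 1) := by
          have hne : la * lb ≠ 0 := mul_ne_zero hla hlb
          exact mul_left_cancel₀ hne (by linear_combination h2)
        have e3 : q ^ ((x.1 : ℕ)) = q ^ ((a0 : ℕ)) := by
          have l1 : q ^ ((x.1 : ℕ)) * q ^ (x.2 + 1) = q ^ ((x.1 : ℕ) + x.2) * q := by
            rw [pow_succ, ← mul_assoc, ← pow_add]
          have l2 : q ^ ((a0 : ℕ)) * q ^ (b0 + 1) = q ^ ((a0 : ℕ) + b0) * q := by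
            rw [pow_succ, ← mul_assoc, ← pow_add]
          have l5 := e2
          rw [mul_sub, mul_sub, mul_one, mul_one, l1, l2, e1] at l5
          linear_combination -l5
        have ha : x.1 = a0 := by
          have := pow_inj_mod q m hq1 hq2 e3
          rw [Nat.mod_eq_of_lt x.1.isLt, Nat.mod_eq_of_lt a0.isLt] at this
          exact Fin.ext this
        have hb : x.2 % m = b0 % m := by
          have l3 : q ^ ((a0 : ℕ) + x.2) = q ^ ((a0 : ℕ) + b0) := by
            rw [show ((a0 : ℕ) + x.2) = ((x.1 : ℕ) + x.2) by rw [ha]]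
            exact e1
          have l4 : q ^ ((a0 : ℕ)) * q ^ x.2 = q ^ ((a0 : ℕ)) * q ^ b0 := by
            rw [← pow_add, ← pow_add]; exact l3
          have l5 := mul_left_cancel₀ (pow_ne_zero _ hq0) l4
          exact pow_inj_mod q m hq1 hq2 l5
        exact ⟨ha, hb⟩
      · rw [if_pos h2, if_neg h1] at hx
        exact absurd rfl hx
    · rw [if_neg h2] at hx
      exact absurd rfl hx
  -- the key upward-generation along the arithmetic progression
  have hdvd : ∀ {c : ℕ}, b0 ≤ c → c % m = b0 % m → m ∣ c - b0 := by
    intro c hc hcm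
    exact (Nat.modEq_iff_dvd' hc).mp hcm.symm
  have key : ∀ n c, b0 ≤ c → c % m = b0 % m → p * m ≤ c + n * m →
      Finsupp.single (a0, c) (1 : K) ∈ W := by
    intro n
    induction n with
    | zero =>
      intro c hc hcm hpc
      exact hMp (mem_Mpm_single m p a0 c (by omega) 1)
    | succ n ih =>
      intro c hc hcm hpc
      by_cases hcp : p * m ≤ c
      · exact hMp (mem_Mpm_single m p a0 c hcp 1)
      set d := c - b0 with hd
      have hdW : ((VF22 (K := K) m) ^ d) w ∈ W := h22pow d w hwW
      have hexp : ((VF22 (K := K) m) ^ d) w =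
          ∑ x ∈ w.support, w x • Finsupp.single (x.1, x.2 + d) (1 : K) := by
        have hrepr : w = ∑ x ∈ w.support, w x • Finsupp.single x (1 : K) := by
          conv_lhs => rw [← Finsupp.sum_single w]
          rw [Finsupp.sum]
          apply Finset.sum_congr rfl
          intro x hx
          rw [Finsupp.smul_single, smul_eq_mul, mul_one]
        conv_lhs => rw [hrepr]
        rw [map_sum]
        apply Finset.sum_congr rfl
        intro x hx
        rw [map_smul]
        congr 1
        exact VF22_pow_single m x.1 x.2 d
      have hp0supp : (a0, b0) ∈ w.support := Finsupp.mem_support_iff.mpr hwb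
      have hsplit : ∑ x ∈ w.support, w x • Finsupp.single (x.1, x.2 + d) (1 : K) =
          w (a0, b0) • Finsupp.single (a0, b0 + d) (1 : K) +
          ∑ x ∈ w.support.erase (a0, b0), w x • Finsupp.single (x.1, x.2 + d) (1 : K) :=
        (Finset.add_sum_erase _ _ hp0supp).symm
      have hrest : ∀ x ∈ w.support.erase (a0, b0),
          w x • Finsupp.single (x.1, x.2 + d) (1 : K) ∈ W := by
        intro x hx
        have hxs : x ∈ w.support := Finset.mem_of_mem_erase hx
        have hxne : x ≠ (a0, b0) := Finset.ne_of_mem_erase hx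
        have hxv : w x ≠ 0 := Finsupp.mem_support_iff.mp hxs
        obtain ⟨hxa, hxm⟩ := hwsupp x hxv
        have hxb : b0 ≤ x.2 := hmin w hwW x hxv
        have hx2ne : x.2 ≠ b0 := by
          intro h
          exact hxne (Prod.ext hxa h)
        have hxge : b0 + m ≤ x.2 := by
          obtain ⟨t, ht⟩ := hdvd hxb hxm
          have : t ≠ 0 := by rintro rfl; omega
          have := Nat.le_of_dvd (by omega) ⟨t, ht⟩  -- m ∣ x.2 - b0? careful direction
          omega
        apply Submodule.smul_mem
        rw [hxa]
        -- apply induction hypothesis at x.2 + d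
        obtain ⟨t, ht⟩ := hdvd hc hcm
        have hmul : (n + 1) * m = n * m + m := by ring
        have hmod : (x.2 + d) % m = b0 % m := by
          have : x.2 + d = x.2 + m * t := by omega
          rw [this, Nat.add_mul_mod_self_left]
          exact hxm
        exact ih (x.2 + d) (by omega) hmod (by omega)
      have hdiff : w (a0, b0) • Finsupp.single (a0, b0 + d) (1 : K) ∈ W := by
        have hsum : ∑ x ∈ w.support.erase (a0, b0),
            w x • Finsupp.single (x.1, x.2 + d) (1 : K) ∈ W := Submodule.sum_mem _ hrest
        have h1 : w (a0, b0) • Finsupp.single (a0, b0 + d) (1 : K) =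
            ((VF22 (K := K) m) ^ d) w -
            ∑ x ∈ w.support.erase (a0, b0), w x • Finsupp.single (x.1, x.2 + d) (1 : K) := by
          rw [hexp, hsplit]; abel
        rw [h1]
        exact Submodule.sub_mem _ hdW hsum
      have hbd : b0 + d = c := by omega
      rw [hbd] at hdiff
      exact smul_mem_cancel W hwb hdiff
  have hsingle_b0 : Finsupp.single (a0, b0) (1 : K) ∈ W := by
    refine key p b0 le_rfl rfl ?_
    omega
  -- generate all of Mpm j
  have hA : ∀ b : ℕ, Finsupp.single (a0, b) (1 : K) ∈ W →
      ∀ a : Fin m, Finsupp.single (a, b) (1 : K) ∈ W := by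
    intro b hx a
    have hstep : ∀ (a' : Fin m), Finsupp.single (a', b) (1 : K) ∈ W →
        Finsupp.single (a' + 1, b) (1 : K) ∈ W := by
      intro a' h
      have h2 := h21 _ h
      rw [VF21_single] at h2
      refine smul_mem_cancel W (c := if ((a' : ℕ) = m - 1) then lb else 1) ?_ h2
      split_ifs
      exacts [hlb, one_ne_zero]
    have hiter : ∀ k : ℕ, Finsupp.single (a0 + (k : Fin m), b) (1 : K) ∈ W := by
      intro k
      induction k with
      | zero => simpa using hx
      | succ k ih =>
        have hcast : ((k + 1 : ℕ) : Fin m) = (k : Fin m) + 1 := by push_cast; ring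
        rw [hcast, ← add_assoc]
        exact hstep _ ih
    have h3 := hiter ((a - a0 : Fin m) : ℕ)
    rw [Fin.cast_val_eq_self] at h3
    rwa [show a0 + (a - a0) = a by ring] at h3
  have hUp : ∀ b, b0 ≤ b → ∀ a : Fin m, Finsupp.single (a, b) (1 : K) ∈ W := by
    intro b hb
    induction b, hb using Nat.le_induction with
    | base => exact hA b0 hsingle_b0
    | succ b hb ih =>
      intro a
      have h2 := h22 _ (ih a)
      rwa [VF22_single] at h2
  have hDown : ∀ k : ℕ, k ≤ b0 - j * m → ∀ a : Fin m,
      Finsupp.single (a, b0 - k) (1 : K) ∈ W := by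
    intro k
    induction k with
    | zero => intro _ a; simpa using hUp b0 le_rfl a
    | succ k ih =>
      intro hk a
      have hk' : k ≤ b0 - j * m := by omega
      have h1 : Finsupp.single (a - 1, b0 - k) (1 : K) ∈ W := ih hk' (a - 1)
      have h2 := h11 _ h1
      rw [VF11_single, if_neg (by omega : ¬ (b0 - k = 0))] at h2
      have hbk : b0 - k - 1 = b0 - (k + 1) := by omega
      rw [hbk, show (a - 1 + 1 : Fin m) = a by ring] at h2
      refine smul_mem_cancel W ?_ h2
      -- the scalar is nonzero
      apply mul_ne_zero
      apply mul_ne_zero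
      apply mul_ne_zero
      · split_ifs; exacts [hlb, one_ne_zero]
      · exact hla
      · exact pow_ne_zero _ hq0
      · -- q ^ (b0 - k) ≠ 1
        rw [sub_ne_zero]
        rw [pow_mod_eq q m hq1]
        have h3 : (j + 1) * m = j * m + m := by ring
        have hlt : b0 - k - j * m < m := by omega
        have hr : (b0 - k) % m = b0 - k - j * m := by
          have hrepr : b0 - k = (b0 - k - j * m) + j * m := by omega
          calc (b0 - k) % m = ((b0 - k - j * m) + j * m) % m := congrArg (· % m) hrepr
            _ = (b0 - k - j * m) % m := by rw [Nat.add_mul_mod_self_right]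
            _ = b0 - k - j * m := Nat.mod_eq_of_lt hlt
        rw [hr]
        apply hq2
        · omega
        · omega
  have hgen : Mpm (K := K) m j ≤ W := by
    conv_lhs => rw [Mpm]
    refine Submodule.span_le.mpr ?_
    rintro u ⟨a, b, hb, rfl⟩
    by_cases hbb : b0 ≤ b
    · exact hUp b hbb a
    · have h4 := hDown (b0 - b) (by omega) a
      rwa [show b0 - (b0 - b) = b by omega] at h4
  have hle : W ≤ Mpm (K := K) m j := by
    rw [Mpm_eq]
    intro u hu
    rw [Finsupp.mem_supported]
    intro x hx
    have hx' : u x ≠ 0 := Finsupp.mem_support_iff.mp hx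
    exact le_trans hjm (hmin u hu x hx')
  exact le_antisymm hle hgen


lemma Mpm_not_le {j j' : ℕ} (h : j < j') : ¬ (Mpm (K := K) m j ≤ Mpm (K := K) m j') := by
  have hm : 0 < m := Nat.pos_of_ne_zero (NeZero.ne m)
  intro hle
  have h1 := hle (mem_Mpm_single m j 0 (j * m) le_rfl 1)
  rw [Mpm_eq, Finsupp.mem_supported] at h1
  have h2 : ((0 : Fin m), j * m) ∈ (Finsupp.single ((0 : Fin m), j * m) (1 : K)).support := by
    simp
  have h3 := h1 h2
  simp only [Set.mem_setOf_eq] at h3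
  have h4 : j * m < j' * m := (Nat.mul_lt_mul_right hm).mpr h
  omega

lemma finrank_quot (p : ℕ) :
    Module.finrank K (VermaSpace K m ⧸ Mpm (K := K) m p) = p * m ^ 2 := by
  classical
  set s : Set (Fin m × ℕ) := {x | p * m ≤ x.2} with hs
  have h1 : Mpm (K := K) m p = Finsupp.supported K K s := Mpm_eq m p
  have hcompl : IsCompl (Finsupp.supported K K s) (Finsupp.supported K K sᶜ) := by
    constructor
    · exact Finsupp.disjoint_supported_supported disjoint_compl_right
    · rw [codisjoint_iff, ← Finsupp.supported_union, Set.union_compl_self,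
        Finsupp.supported_univ]
  have e1 : (VermaSpace K m ⧸ Mpm (K := K) m p) ≃ₗ[K] Finsupp.supported K K sᶜ := by
    rw [h1]; exact Submodule.quotientEquivOfIsCompl _ _ hcompl
  have e2 : (Finsupp.supported K K sᶜ) ≃ₗ[K] (↥sᶜ →₀ K) := Finsupp.supportedEquivFinsupp sᶜ
  have e3 : (↥sᶜ) ≃ (Fin m × Fin (p * m)) :=
    { toFun := fun x => (x.1.1, ⟨x.1.2, by
        have hx := x.2
        simp only [hs, Set.mem_compl_iff, Set.mem_setOf_eq, not_le] at hx
        exact hx⟩),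
      invFun := fun y => ⟨(y.1, (y.2 : ℕ)), by
        simp only [hs, Set.mem_compl_iff, Set.mem_setOf_eq, not_le]
        exact y.2.isLt⟩,
      left_inv := fun x => Subtype.ext rfl,
      right_inv := fun y => rfl }
  have e4 : (↥sᶜ →₀ K) ≃ₗ[K] ((Fin m × Fin (p * m)) →₀ K) := Finsupp.domLCongr e3
  rw [(e1.trans (e2.trans e4)).finrank_eq, Module.finrank_finsupp_self, Fintype.card_prod,
    Fintype.card_fin, Fintype.card_fin]
  ring

end QpAux

open QpAux in
/-- Let `q` be a primitive `m`-th root of unity, `λ₁, λ₂ ∈ K` nonzero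
and `p > 1`. The quotient `Q_{p,m} = M(λ)/M_{p,m}` of the Verma module has `K`-dimension
`p·m²`, is not simple, is not semisimple, but is indecomposable. Submodules of `Q_{p,m}`
correspond to invariant subspaces of `M(λ)` containing `M_{p,m}`. -/
theorem DDMat2_verma_quotient_Qp_indecomposable
    (hq1 : q ^ m = 1) (hq2 : ∀ k : ℕ, 1 ≤ k → k < m → q ^ k ≠ 1)
    (hla : la ≠ 0) (hlb : lb ≠ 0) (p : ℕ) (hp : 1 < p) :
    -- the dimension of `Q_{p,m}` is `p·m²`
    Module.finrank K (VermaSpace K m ⧸ Mpm (K := K) m p) = p * m ^ 2 ∧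
    -- `Q_{p,m}` is not simple: there is an invariant subspace strictly between
    -- `M_{p,m}` and the whole module
    (∃ W : Submodule K (VermaSpace K m),
        (∀ v ∈ W, VF11 q la lb m v ∈ W) ∧ (∀ v ∈ W, VF12 q la m v ∈ W) ∧
        (∀ v ∈ W, VF21 lb m v ∈ W) ∧ (∀ v ∈ W, VF22 (K := K) m v ∈ W) ∧
        Mpm (K := K) m p < W ∧ W < ⊤) ∧
    -- `Q_{p,m}` is not semisimple: some invariant subspace of the quotient has no
    -- invariant complement
    ¬ (∀ W : Submodule K (VermaSpace K m),
        (∀ v ∈ W, VF11 q la lb m v ∈ W) → (∀ v ∈ W, VF12 q la m v ∈ W) →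
        (∀ v ∈ W, VF21 lb m v ∈ W) → (∀ v ∈ W, VF22 (K := K) m v ∈ W) →
        Mpm (K := K) m p ≤ W →
        ∃ W' : Submodule K (VermaSpace K m),
          (∀ v ∈ W', VF11 q la lb m v ∈ W') ∧ (∀ v ∈ W', VF12 q la m v ∈ W') ∧
          (∀ v ∈ W', VF21 lb m v ∈ W') ∧ (∀ v ∈ W', VF22 (K := K) m v ∈ W') ∧
          Mpm (K := K) m p ≤ W' ∧ W ⊓ W' = Mpm (K := K) m p ∧ W ⊔ W' = ⊤) ∧
    -- `Q_{p,m}` is indecomposable: it is not the direct sum of two nonzero submodules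
    (∀ W₁ W₂ : Submodule K (VermaSpace K m),
        (∀ v ∈ W₁, VF11 q la lb m v ∈ W₁) → (∀ v ∈ W₁, VF12 q la m v ∈ W₁) →
        (∀ v ∈ W₁, VF21 lb m v ∈ W₁) → (∀ v ∈ W₁, VF22 (K := K) m v ∈ W₁) →
        (∀ v ∈ W₂, VF11 q la lb m v ∈ W₂) → (∀ v ∈ W₂, VF12 q la m v ∈ W₂) →
        (∀ v ∈ W₂, VF21 lb m v ∈ W₂) → (∀ v ∈ W₂, VF22 (K := K) m v ∈ W₂) →
        Mpm (K := K) m p ≤ W₁ → Mpm (K := K) m p ≤ W₂ →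
        W₁ ⊓ W₂ = Mpm (K := K) m p → W₁ ⊔ W₂ = ⊤ →
        W₁ = Mpm (K := K) m p ∨ W₂ = Mpm (K := K) m p) := by
  have hm : 0 < m := Nat.pos_of_ne_zero (NeZero.ne m)
  refine ⟨finrank_quot m p, ?_, ?_, ?_⟩
  · -- not simple
    refine ⟨Mpm (K := K) m 1, Mpm_inv11 q la lb m hq1 1, Mpm_inv12 q la m 1,
      Mpm_inv21 lb m 1, Mpm_inv22 m 1, ?_, ?_⟩
    · exact lt_of_le_not_ge (Mpm_mono m (by omega)) (fun h => Mpm_not_le m hp h)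
    · rw [← Mpm_zero (K := K) m]
      exact lt_of_le_not_ge (Mpm_mono m (by omega)) (fun h => Mpm_not_le m (by omega) h)
  · -- not semisimple
    intro hss
    obtain ⟨W', i11, i12, i21, i22, hle', hinf, hsup⟩ :=
      hss (Mpm (K := K) m 1) (Mpm_inv11 q la lb m hq1 1) (Mpm_inv12 q la m 1)
        (Mpm_inv21 lb m 1) (Mpm_inv22 m 1) (Mpm_mono m (by omega))
    obtain ⟨j, rfl⟩ := classify q la lb m hq1 hq2 hla hlb p W' i11 i12 i21 i22 hle'
    by_cases hj : 1 ≤ j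
    · have hsub : Mpm (K := K) m j ≤ Mpm (K := K) m 1 := Mpm_mono m hj
      have h2 : Mpm (K := K) m 1 ⊔ Mpm (K := K) m j = Mpm (K := K) m 1 := sup_eq_left.mpr hsub
      rw [h2] at hsup
      have h3 : Mpm (K := K) m 0 ≤ Mpm (K := K) m 1 := by rw [Mpm_zero, ← hsup]
      exact Mpm_not_le m (by omega) h3
    · have hj0 : j = 0 := by omega
      rw [hj0, Mpm_zero, inf_top_eq] at hinf
      exact Mpm_not_le m hp (le_of_eq hinf)
  · -- indecomposable
    intro W₁ W₂ i11 i12 i21 i22 k11 k12 k21 k22 hW₁ hW₂ hinf hsup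
    obtain ⟨j₁, rfl⟩ := classify q la lb m hq1 hq2 hla hlb p W₁ i11 i12 i21 i22 hW₁
    obtain ⟨j₂, rfl⟩ := classify q la lb m hq1 hq2 hla hlb p W₂ k11 k12 k21 k22 hW₂
    rcases le_total j₁ j₂ with h | h
    · right
      rw [← hinf, inf_eq_right.mpr (Mpm_mono m h)]
    · left
      rw [← hinf, inf_eq_left.mpr (Mpm_mono m h)]
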